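/- Let A be a real C*-algebra, H a finite-dimensional A-bimodule, J an antiunitary on H with J² = ε (ε = ±1), ρ(a) = Jλ(a*)J* for all a ∈ A, and let εʹ = ±1. Define R(M) = M + εʹ J M J* for M a right A-linear self-adjoint operator on H. Then: (1) R(M) is a self-adjoint operator satisfying the order-one condition [[R(M), λ(a)], ρ(b)] = 0 for all a, b ∈ A and J R(M) = εʹ R(M) J; (2) every self-adjoint D satisfying the order-one condition together with DJ = εʹ JD lies in the image of R; (3) ker R consists of operators that are both left and right A-linear. -/

import Mathlib

open Matrix

/-- Conjugation of a matrix by the antiunitary J = U ∘ (complex conjugation):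
J M J* corresponds to U M̄ Uᴴ. -/
noncomputable def conjJ (d : ℕ) (U M : Matrix (Fin d) (Fin d) ℂ) :
    Matrix (Fin d) (Fin d) ℂ :=
  U * M.map (starRingEnd ℂ) * Uᴴ

namespace S12aux

lemma map_conj_conjTranspose {d : ℕ} (M : Matrix (Fin d) (Fin d) ℂ) :
    (Mᴴ).map (starRingEnd ℂ) = (M.map (starRingEnd ℂ))ᴴ := by
  ext i j
  simp [Matrix.map_apply, Matrix.conjTranspose_apply]

lemma trace_map_conj {d : ℕ} (M : Matrix (Fin d) (Fin d) ℂ) :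
    (M.map (starRingEnd ℂ)).trace = starRingEnd ℂ M.trace := by
  simp [Matrix.trace, Matrix.diag, Matrix.map_apply]

variable {d : ℕ} {U : Matrix (Fin d) (Fin d) ℂ}

lemma conjJ_mul (hUU : Uᴴ * U = 1) (M N : Matrix (Fin d) (Fin d) ℂ) :
    conjJ d U (M * N) = conjJ d U M * conjJ d U N := by
  unfold conjJ
  rw [Matrix.map_mul]
  generalize M.map (starRingEnd ℂ) = M'
  generalize N.map (starRingEnd ℂ) = N'
  calc U * (M' * N') * Uᴴ = U * M' * ((Uᴴ * U) * (N' * Uᴴ)) := by rw [hUU]; noncomm_ring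
  _ = U * M' * Uᴴ * (U * N' * Uᴴ) := by noncomm_ring

lemma conjJ_add (M N : Matrix (Fin d) (Fin d) ℂ) :
    conjJ d U (M + N) = conjJ d U M + conjJ d U N := by
  unfold conjJ
  have : (M + N).map (starRingEnd ℂ) = M.map (starRingEnd ℂ) + N.map (starRingEnd ℂ) := by
    ext i j; simp [Matrix.map_apply]
  rw [this]
  noncomm_ring

lemma conjJ_sub (M N : Matrix (Fin d) (Fin d) ℂ) :
    conjJ d U (M - N) = conjJ d U M - conjJ d U N := by
  unfold conjJ
  have : (M - N).map (starRingEnd ℂ) = M.map (starRingEnd ℂ) - N.map (starRingEnd ℂ) := by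
    ext i j; simp [Matrix.map_apply]
  rw [this]
  noncomm_ring

lemma conjJ_smul (c : ℂ) (M : Matrix (Fin d) (Fin d) ℂ) :
    conjJ d U (c • M) = starRingEnd ℂ c • conjJ d U M := by
  unfold conjJ
  have : (c • M).map (starRingEnd ℂ) = starRingEnd ℂ c • M.map (starRingEnd ℂ) := by
    ext i j; simp [Matrix.map_apply]
  rw [this, Matrix.mul_smul, Matrix.smul_mul]

lemma conjJ_conjTranspose (M : Matrix (Fin d) (Fin d) ℂ) :
    conjJ d U (Mᴴ) = (conjJ d U M)ᴴ := by
  unfold conjJ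
  rw [map_conj_conjTranspose]
  simp [Matrix.conjTranspose_mul, mul_assoc]

lemma conjTranspose_map_conj_eq_transpose (M : Matrix (Fin d) (Fin d) ℂ) :
    (Mᴴ).map (starRingEnd ℂ) = Mᵀ := by
  ext i j
  simp [Matrix.map_apply, Matrix.conjTranspose_apply]

lemma map_conj_eq_smul_conjTranspose {e : ℝ} (hJ2 : U * U.map (starRingEnd ℂ) = (e : ℂ) • 1)
    (hUU : Uᴴ * U = 1) : U.map (starRingEnd ℂ) = (e : ℂ) • Uᴴ := by
  have := congrArg (fun X => Uᴴ * X) hJ2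
  simpa [← mul_assoc, hUU, Matrix.mul_smul] using this

lemma conjJ_conjJ {e : ℝ} (he : e = 1 ∨ e = -1)
    (hJ2 : U * U.map (starRingEnd ℂ) = (e : ℂ) • 1) (hUU : Uᴴ * U = 1)
    (M : Matrix (Fin d) (Fin d) ℂ) : conjJ d U (conjJ d U M) = M := by
  have hUc := map_conj_eq_smul_conjTranspose hJ2 hUU
  have he2 : (e : ℂ) * (e : ℂ) = 1 := by rcases he with rfl | rfl <;> norm_num
  unfold conjJ
  rw [Matrix.map_mul, Matrix.map_mul]
  rw [show (M.map (starRingEnd ℂ)).map (starRingEnd ℂ) = M from by ext i j; simp [Matrix.map_apply]]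
  rw [conjTranspose_map_conj_eq_transpose, hUc]
  have hUt : Uᵀ * Uᴴ = (e : ℂ) • 1 := by
    have : U.map (starRingEnd ℂ) * U = (e : ℂ) • 1 := by
      rw [hUc, Matrix.smul_mul, hUU]
    have := congrArg Matrix.transpose this
    rw [Matrix.transpose_mul, Matrix.transpose_smul, Matrix.transpose_one] at this
    rwa [show (U.map (starRingEnd ℂ))ᵀ = Uᴴ from rfl] at this
  have hUU' : U * Uᴴ = 1 := mul_eq_one_comm.mp hUU
  rw [Matrix.smul_mul, Matrix.smul_mul, Matrix.mul_smul, Matrix.smul_mul]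
  have hassoc : U * (Uᴴ * M * Uᵀ) * Uᴴ = (U * Uᴴ) * M * (Uᵀ * Uᴴ) := by noncomm_ring
  rw [hassoc, hUU', hUt, one_mul, Matrix.mul_smul, mul_one, smul_smul, he2, one_smul]


lemma trace_CTms (d : ℕ) (X : Matrix (Fin d) (Fin d) ℂ) :
    (Xᴴ * X).trace = ((∑ j, ∑ i, Complex.normSq (X i j) : ℝ) : ℂ) := by
  push_cast
  simp [Matrix.trace, Matrix.diag, Matrix.mul_apply, Matrix.conjTranspose_apply,
    Complex.normSq_eq_conj_mul_self]

noncomputable def matCore (d : ℕ) : InnerProductSpace.Core ℂ (Matrix (Fin d) (Fin d) ℂ) where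
  inner X Y := (Xᴴ * Y).trace
  conj_inner_symm X Y := by
    show (starRingEnd ℂ) (Yᴴ*X).trace = (Xᴴ*Y).trace
    have : (Yᴴ*X)ᴴ = Xᴴ*Y := by simp
    calc (starRingEnd ℂ) (Yᴴ*X).trace = ((Yᴴ*X)ᴴ).trace := (Matrix.trace_conjTranspose _).symm
    _ = (Xᴴ*Y).trace := by rw [this]
  re_inner_nonneg X := by
    show 0 ≤ RCLike.re ((Xᴴ*X).trace)
    rw [trace_CTms]
    simpa using Finset.sum_nonneg fun j (_ : j ∈ Finset.univ) => Finset.sum_nonneg fun i _ => Complex.normSq_nonneg (X i j)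
  add_left X Y Z := by
    show ((X+Y)ᴴ*Z).trace = (Xᴴ*Z).trace + (Yᴴ*Z).trace
    simp [conjTranspose_add, add_mul]
  smul_left X Y r := by
    show ((r • X)ᴴ*Y).trace = (starRingEnd ℂ) r * (Xᴴ*Y).trace
    simp [conjTranspose_smul, smul_mul_assoc]
  definite X h := by
    replace h : (Xᴴ*X).trace = 0 := h
    rw [trace_CTms] at h
    norm_cast at h
    have h2 : ∀ j i, Complex.normSq (X i j) = 0 := by
      intro j i
      have := (Finset.sum_eq_zero_iff_of_nonneg (fun j _ => Finset.sum_nonneg fun i _ => Complex.normSq_nonneg _)).mp h j (Finset.mem_univ _)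
      exact (Finset.sum_eq_zero_iff_of_nonneg (fun i _ => Complex.normSq_nonneg _)).mp this i (Finset.mem_univ _)
    ext i j
    simpa using Complex.normSq_eq_zero.mp (h2 j i)

noncomputable instance matNorm (d : ℕ) : NormedAddCommGroup (Matrix (Fin d) (Fin d) ℂ) :=
  (matCore d).toNormedAddCommGroup

noncomputable instance matIPS (d : ℕ) : InnerProductSpace ℂ (Matrix (Fin d) (Fin d) ℂ) :=
  InnerProductSpace.ofCore (matCore d).toCore

lemma matInner_def (d : ℕ) (X Y : Matrix (Fin d) (Fin d) ℂ) :
    (inner ℂ X Y : ℂ) = (Xᴴ * Y).trace := rfl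

/-- The commutant of a set of matrices, as a submodule. -/
noncomputable def commSub (d : ℕ) (s : Set (Matrix (Fin d) (Fin d) ℂ)) :
    Submodule ℂ (Matrix (Fin d) (Fin d) ℂ) where
  carrier := {X | ∀ t ∈ s, t * X = X * t}
  add_mem' := by intro X Y hX hY t ht; simp [mul_add, add_mul, hX t ht, hY t ht]
  zero_mem' := by intro t ht; simp
  smul_mem' := by intro c X hX t ht; simp [Matrix.mul_smul, Matrix.smul_mul, hX t ht]

/-- conditional expectation -/
noncomputable def E (d : ℕ) (s : Set (Matrix (Fin d) (Fin d) ℂ)) (X : Matrix (Fin d) (Fin d) ℂ) :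
    Matrix (Fin d) (Fin d) ℂ :=
  (Submodule.orthogonalProjectionOnto (commSub d s) X : Matrix (Fin d) (Fin d) ℂ)

lemma E_mem (d : ℕ) (s : Set (Matrix (Fin d) (Fin d) ℂ)) (X : Matrix (Fin d) (Fin d) ℂ) :
    E d s X ∈ commSub d s := (Submodule.orthogonalProjectionOnto (commSub d s) X).2

lemma E_fix (d : ℕ) (s : Set (Matrix (Fin d) (Fin d) ℂ)) (X : Matrix (Fin d) (Fin d) ℂ)
    (h : X ∈ commSub d s) : E d s X = X := by
  exact Submodule.starProjection_eq_self_iff.mpr h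


lemma conjJ_inner (hUU : Uᴴ * U = 1) (X Y : Matrix (Fin d) (Fin d) ℂ) :
    (inner ℂ (conjJ d U X) (conjJ d U Y) : ℂ) = starRingEnd ℂ (inner ℂ X Y) := by
  rw [matInner_def, matInner_def]
  unfold conjJ
  generalize hX : X.map (starRingEnd ℂ) = X'
  generalize hY : Y.map (starRingEnd ℂ) = Y'
  have h1 : (U * X' * Uᴴ)ᴴ * (U * Y' * Uᴴ) = U * X'ᴴ * ((Uᴴ * U) * (Y' * Uᴴ)) := by
    simp only [Matrix.conjTranspose_mul, Matrix.conjTranspose_conjTranspose]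
    noncomm_ring
  rw [h1, hUU, one_mul]
  have h2 : U * X'ᴴ * (Y' * Uᴴ) = U * (X'ᴴ * Y' * Uᴴ) := by noncomm_ring
  rw [h2, Matrix.trace_mul_comm, mul_assoc, hUU, mul_one]
  subst hX hY
  rw [← map_conj_conjTranspose, ← Matrix.map_mul, trace_map_conj]

lemma commSub_mul_mem {s : Set (Matrix (Fin d) (Fin d) ℂ)} {X Y : Matrix (Fin d) (Fin d) ℂ}
    (hX : X ∈ commSub d s) (hY : Y ∈ commSub d s) : X * Y ∈ commSub d s := by
  intro t ht
  calc t * (X * Y) = X * (t * Y) := by rw [← mul_assoc, hX t ht, mul_assoc]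
  _ = X * Y * t := by rw [hY t ht, mul_assoc]

lemma commSub_star_mem {s : Set (Matrix (Fin d) (Fin d) ℂ)} (hs : ∀ t ∈ s, tᴴ ∈ s)
    {X : Matrix (Fin d) (Fin d) ℂ} (hX : X ∈ commSub d s) : Xᴴ ∈ commSub d s := by
  intro t ht
  have := congrArg Matrix.conjTranspose (hX tᴴ (hs t ht))
  simpa [Matrix.conjTranspose_mul] using this.symm

lemma E_sub (s : Set (Matrix (Fin d) (Fin d) ℂ)) (X Y : Matrix (Fin d) (Fin d) ℂ) :
    E d s (X - Y) = E d s X - E d s Y := by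
  unfold E
  rw [map_sub]
  rfl

lemma E_smul (s : Set (Matrix (Fin d) (Fin d) ℂ)) (c : ℂ) (X : Matrix (Fin d) (Fin d) ℂ) :
    E d s (c • X) = c • E d s X := by
  unfold E
  rw [_root_.map_smul]
  rfl

lemma E_unique {s : Set (Matrix (Fin d) (Fin d) ℂ)} {X Y : Matrix (Fin d) (Fin d) ℂ}
    (hY : Y ∈ commSub d s) (h : ∀ w ∈ commSub d s, (inner ℂ (X - Y) w : ℂ) = 0) :
    E d s X = Y :=
  Submodule.eq_starProjection_of_mem_of_inner_eq_zero hY h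

lemma E_perp (s : Set (Matrix (Fin d) (Fin d) ℂ)) (X : Matrix (Fin d) (Fin d) ℂ)
    {w : Matrix (Fin d) (Fin d) ℂ} (hw : w ∈ commSub d s) :
    (inner ℂ (X - E d s X) w : ℂ) = 0 :=
  Submodule.starProjection_inner_eq_zero X w hw

lemma E_star {s : Set (Matrix (Fin d) (Fin d) ℂ)} (hs : ∀ t ∈ s, tᴴ ∈ s)
    (X : Matrix (Fin d) (Fin d) ℂ) : E d s Xᴴ = (E d s X)ᴴ := by
  apply E_unique (commSub_star_mem hs (E_mem d s X))
  intro w hw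
  have h1 : Xᴴ - (E d s X)ᴴ = (X - E d s X)ᴴ := by rw [Matrix.conjTranspose_sub]
  rw [h1, matInner_def]
  have h2 : ((X - E d s X)ᴴ)ᴴ * w = (X - E d s X) * w := by
    rw [Matrix.conjTranspose_conjTranspose]
  rw [h2]
  have h3 : ((X - E d s X) * w).trace = (wᴴᴴ * (X - E d s X)).trace := by
    rw [Matrix.conjTranspose_conjTranspose, Matrix.trace_mul_comm]
  rw [h3, ← matInner_def]
  have h4 : (inner ℂ (wᴴ) (X - E d s X) : ℂ) = starRingEnd ℂ (inner ℂ (X - E d s X) (wᴴ)) := by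
    rw [← inner_conj_symm]
  rw [h4, E_perp s X (commSub_star_mem hs hw), map_zero]

lemma E_mul_left {s : Set (Matrix (Fin d) (Fin d) ℂ)} {b : Matrix (Fin d) (Fin d) ℂ}
    (hb : b ∈ commSub d s) (hb' : bᴴ ∈ commSub d s) (X : Matrix (Fin d) (Fin d) ℂ) :
    E d s (b * X) = b * E d s X := by
  apply E_unique (commSub_mul_mem hb (E_mem d s X))
  intro w hw
  have h1 : b * X - b * E d s X = b * (X - E d s X) := by rw [mul_sub]
  rw [h1, matInner_def, Matrix.conjTranspose_mul]
  have h2 : ((X - E d s X)ᴴ * bᴴ * w).trace = ((X - E d s X)ᴴ * (bᴴ * w)).trace := by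
    rw [mul_assoc]
  rw [h2, ← matInner_def]
  exact E_perp s X (commSub_mul_mem hb' hw)

lemma E_mul_right {s : Set (Matrix (Fin d) (Fin d) ℂ)} {b : Matrix (Fin d) (Fin d) ℂ}
    (hb : b ∈ commSub d s) (hb' : bᴴ ∈ commSub d s) (X : Matrix (Fin d) (Fin d) ℂ) :
    E d s (X * b) = E d s X * b := by
  apply E_unique (commSub_mul_mem (E_mem d s X) hb)
  intro w hw
  have h1 : X * b - E d s X * b = (X - E d s X) * b := by rw [sub_mul]
  rw [h1, matInner_def]
  have h2 : (((X - E d s X) * b)ᴴ * w).trace = ((X - E d s X)ᴴ * (w * bᴴ)).trace := by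
    rw [Matrix.conjTranspose_mul, mul_assoc, Matrix.trace_mul_comm, mul_assoc]
  rw [h2, ← matInner_def]
  exact E_perp s X (commSub_mul_mem hw hb')

lemma E_swap {s t : Set (Matrix (Fin d) (Fin d) ℂ)}
    (hst : ∀ X ∈ commSub d s, conjJ d U X ∈ commSub d t)
    (hts : ∀ X ∈ commSub d t, conjJ d U X ∈ commSub d s)
    (hinv : ∀ X : Matrix (Fin d) (Fin d) ℂ, conjJ d U (conjJ d U X) = X)
    (hUU : Uᴴ * U = 1)
    (X : Matrix (Fin d) (Fin d) ℂ) :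
    E d t (conjJ d U X) = conjJ d U (E d s X) := by
  apply E_unique (hst _ (E_mem d s X))
  intro w hw
  rw [← conjJ_sub, ← hinv w, conjJ_inner hUU, E_perp s X (hts w hw), map_zero]

end S12aux

open S12aux

/-- for an A-bimodule (λ, ρ(a) = Jλ(a*)J*) with antiunitary J
(modelled by the unitary U, J = U ∘ conj, J² = ε), the map R(M) = M + ε′ J M J* on
right A-linear self-adjoint operators: (1) produces self-adjoint operators satisfying
the order-one condition and J R(M) = ε′ R(M) J; (2) is onto the set of self-adjoint D
with the order-one condition and DJ = ε′JD; (3) has kernel consisting of operators that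
are also left A-linear. -/
theorem stmt_12 {A : Type*} [NormedRing A] [StarRing A] [CStarRing A]
    [NormedAlgebra ℝ A] [FiniteDimensional ℝ A]
    (hsymm : ∀ a : A, IsUnit (1 + star a * a))
    (d : ℕ) (lam : A →⋆ₐ[ℝ] Matrix (Fin d) (Fin d) ℂ)
    (U : Matrix (Fin d) (Fin d) ℂ) (hU : U ∈ Matrix.unitaryGroup (Fin d) ℂ)
    (ε ε' : ℝ) (hε : ε = 1 ∨ ε = -1) (hε' : ε' = 1 ∨ ε' = -1)
    (hJ2 : U * U.map (starRingEnd ℂ) = (ε : ℂ) • 1)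
    (rho : A → Matrix (Fin d) (Fin d) ℂ)
    (hrho : ∀ a, rho a = conjJ d U (lam (star a)))
    (horder0 : ∀ a b : A, lam a * rho b = rho b * lam a) :
    (∀ M : Matrix (Fin d) (Fin d) ℂ, Mᴴ = M → (∀ a, M * rho a = rho a * M) →
      (M + (ε' : ℂ) • conjJ d U M)ᴴ = M + (ε' : ℂ) • conjJ d U M ∧
      (∀ a b : A,
        ((M + (ε' : ℂ) • conjJ d U M) * lam a - lam a * (M + (ε' : ℂ) • conjJ d U M)) * rho b
          = rho b *
            ((M + (ε' : ℂ) • conjJ d U M) * lam a - lam a * (M + (ε' : ℂ) • conjJ d U M))) ∧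
      conjJ d U (M + (ε' : ℂ) • conjJ d U M) = (ε' : ℂ) • (M + (ε' : ℂ) • conjJ d U M)) ∧
    (∀ D : Matrix (Fin d) (Fin d) ℂ, Dᴴ = D →
      (∀ a b : A, (D * lam a - lam a * D) * rho b = rho b * (D * lam a - lam a * D)) →
      conjJ d U D = (ε' : ℂ) • D →
      ∃ M : Matrix (Fin d) (Fin d) ℂ, Mᴴ = M ∧ (∀ a, M * rho a = rho a * M) ∧
        D = M + (ε' : ℂ) • conjJ d U M) ∧
    (∀ M : Matrix (Fin d) (Fin d) ℂ, Mᴴ = M → (∀ a, M * rho a = rho a * M) →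
      M + (ε' : ℂ) • conjJ d U M = 0 → ∀ a, M * lam a = lam a * M) := by
  have hUU : Uᴴ * U = 1 := by
    have := (Unitary.mem_iff.mp hU).1
    rwa [Matrix.star_eq_conjTranspose] at this
  have hinv : ∀ X : Matrix (Fin d) (Fin d) ℂ, conjJ d U (conjJ d U X) = X :=
    conjJ_conjJ hε hJ2 hUU
  have he'2 : (ε' : ℂ) * (ε' : ℂ) = 1 := by rcases hε' with rfl | rfl <;> norm_num
  have hc' : starRingEnd ℂ ((ε' : ℝ) : ℂ) = ((ε' : ℝ) : ℂ) := Complex.conj_ofReal ε'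
  have hlamstar : ∀ a : A, (lam a)ᴴ = lam (star a) := fun a => by
    rw [map_star, Matrix.star_eq_conjTranspose]
  have hconjlam : ∀ a : A, conjJ d U (lam a) = rho (star a) := fun a => by
    rw [hrho (star a), star_star]
  have hconjrho : ∀ a : A, conjJ d U (rho a) = lam (star a) := fun a => by
    rw [hrho a, hinv]
  have hrhostar : ∀ a : A, (rho a)ᴴ = rho (star a) := fun a => by
    rw [hrho a, ← conjJ_conjTranspose, hlamstar, star_star, hconjlam a]
  set sl : Set (Matrix (Fin d) (Fin d) ℂ) := Set.range (fun a : A => lam a) with hsl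
  set sr : Set (Matrix (Fin d) (Fin d) ℂ) := Set.range rho with hsr
  have hslstar : ∀ t ∈ sl, tᴴ ∈ sl := by rintro t ⟨a, rfl⟩; exact ⟨star a, (hlamstar a).symm⟩
  have hsrstar : ∀ t ∈ sr, tᴴ ∈ sr := by rintro t ⟨a, rfl⟩; exact ⟨star a, (hrhostar a).symm⟩
  have hlam_mem : ∀ a : A, lam a ∈ commSub d sr := by
    intro a; rintro t ⟨b, rfl⟩; exact (horder0 a b).symm
  have hrho_mem : ∀ a : A, rho a ∈ commSub d sl := by
    intro a; rintro t ⟨b, rfl⟩; exact horder0 b a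
  have hswap1 : ∀ X ∈ commSub d sr, conjJ d U X ∈ commSub d sl := by
    intro X hX
    rintro t ⟨b, rfl⟩
    have h := hX (rho (star b)) ⟨star b, rfl⟩
    have h2 := congrArg (conjJ d U) h
    rw [conjJ_mul hUU, conjJ_mul hUU, hconjrho, star_star] at h2
    exact h2
  have hswap2 : ∀ X ∈ commSub d sl, conjJ d U X ∈ commSub d sr := by
    intro X hX
    rintro t ⟨b, rfl⟩
    have h := hX (lam (star b)) ⟨star b, rfl⟩
    have h2 := congrArg (conjJ d U) h
    rw [conjJ_mul hUU, conjJ_mul hUU, hconjlam, star_star] at h2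
    exact h2
  refine ⟨?_, ?_, ?_⟩
  · -- Part 1
    intro M hM hMr
    have hMmem : M ∈ commSub d sr := by rintro t ⟨b, rfl⟩; exact (hMr b).symm
    have hC : ∀ a : A, lam a * conjJ d U M = conjJ d U M * lam a := fun a =>
      hswap1 M hMmem (lam a) ⟨a, rfl⟩
    refine ⟨?_, ?_, ?_⟩
    · rw [Matrix.conjTranspose_add, Matrix.conjTranspose_smul, ← conjJ_conjTranspose, hM]
      rw [show star ((ε' : ℝ) : ℂ) = ((ε' : ℝ) : ℂ) from hc']
    · intro a b
      have key : (M + (ε' : ℂ) • conjJ d U M) * lam a - lam a * (M + (ε' : ℂ) • conjJ d U M)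
          = M * lam a - lam a * M := by
        rw [add_mul, mul_add, Matrix.smul_mul, Matrix.mul_smul, hC a]
        abel
      rw [key, sub_mul, mul_sub]
      congr 1
      · rw [mul_assoc, horder0 a b, ← mul_assoc, hMr b, mul_assoc]
      · rw [mul_assoc, hMr b, ← mul_assoc, horder0 a b, mul_assoc]
    · rw [conjJ_add, conjJ_smul, hinv, hc', smul_add, smul_smul, he'2, one_smul, add_comm]
  · -- Part 2
    intro D hD horder hDJ
    have horder' : ∀ a b : A, (D * rho a - rho a * D) * lam b = lam b * (D * rho a - rho a * D) := by
      intro a b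
      have h := horder b a
      have h1 : (D * lam b - lam b * D) * rho a = D * rho a * lam b - lam b * (D * rho a) := by
        rw [sub_mul, mul_assoc D, horder0 b a, ← mul_assoc, mul_assoc (lam b)]
      have h2 : rho a * (D * lam b - lam b * D) = rho a * D * lam b - lam b * (rho a * D) := by
        rw [mul_sub, ← mul_assoc, ← mul_assoc, ← horder0 b a, mul_assoc (lam b)]
      rw [h1, h2] at h
      rw [sub_mul, mul_sub]
      rw [sub_eq_sub_iff_add_eq_add] at h ⊢
      exact h.trans (add_comm _ _)
    have hDin : ∀ a : A, D * rho a - rho a * D ∈ commSub d sl := by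
      intro a; rintro t ⟨b, rfl⟩; exact (horder' a b).symm
    set P : Matrix (Fin d) (Fin d) ℂ := E d sl D with hP
    set Q : Matrix (Fin d) (Fin d) ℂ := E d sr D with hQ
    have key1 : ∀ a : A, D * rho a - rho a * D = P * rho a - rho a * P := by
      intro a
      have hfix := E_fix d sl _ (hDin a)
      rw [E_sub, E_mul_right (hrho_mem a) (by rw [hrhostar]; exact hrho_mem (star a)),
        E_mul_left (hrho_mem a) (by rw [hrhostar]; exact hrho_mem (star a))] at hfix
      exact hfix.symm
    have hDP : ∀ a : A, (D - P) * rho a = rho a * (D - P) := by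
      intro a
      rw [sub_mul, mul_sub]
      rw [sub_eq_sub_iff_add_eq_add]
      have := key1 a
      rw [sub_eq_sub_iff_add_eq_add] at this
      calc D * rho a + rho a * P = P * rho a + rho a * D := this
      _ = rho a * D + P * rho a := add_comm _ _
    have hPh : Pᴴ = P := by rw [hP, ← E_star hslstar, hD]
    have hQh : Qᴴ = Q := by rw [hQ, ← E_star hsrstar, hD]
    have hQmem : Q ∈ commSub d sr := E_mem d sr D
    refine ⟨(2⁻¹ : ℂ) • (D - P + Q), ?_, ?_, ?_⟩
    · rw [Matrix.conjTranspose_smul, Matrix.conjTranspose_add, Matrix.conjTranspose_sub,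
        hD, hPh, hQh]
      norm_num
    · intro a
      rw [Matrix.smul_mul, Matrix.mul_smul]
      congr 1
      rw [add_mul, mul_add, hDP a, hQmem (rho a) ⟨a, rfl⟩]
    · have hCP : conjJ d U P = (ε' : ℂ) • Q := by
        rw [hP, ← E_swap hswap2 hswap1 hinv hUU, hDJ, E_smul, hQ]
      have hCQ : conjJ d U Q = (ε' : ℂ) • P := by
        rw [hQ, ← E_swap hswap1 hswap2 hinv hUU, hDJ, E_smul, hP]
      rw [conjJ_smul, conjJ_add, conjJ_sub, hDJ, hCP, hCQ]
      rw [show starRingEnd ℂ (2⁻¹ : ℂ) = (2⁻¹ : ℂ) by rw [map_inv₀, Complex.conj_ofNat]]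
      have hst : ((ε':ℝ):ℂ) • D - (ε':ℂ) • Q + (ε':ℂ) • P = (ε':ℂ) • (D - Q + P) := by
        rw [smul_add, smul_sub]
      rw [hst, smul_smul, smul_smul]
      have hsc : (ε':ℂ) * 2⁻¹ * (ε':ℂ) = 2⁻¹ := by
        rw [mul_comm ((ε':ℂ)) (2⁻¹:ℂ), mul_assoc, he'2, mul_one]
      rw [hsc, ← smul_add]
      have hDD : (D - P + Q) + (D - Q + P) = D + D := by abel
      rw [hDD, smul_add, ← add_smul]
      norm_num
  · -- Part 3
    intro M hM hMr hker a
    have hMmem : M ∈ commSub d sr := by rintro t ⟨b, rfl⟩; exact (hMr b).symm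
    have hC : lam a * conjJ d U M = conjJ d U M * lam a := hswap1 M hMmem (lam a) ⟨a, rfl⟩
    have hMeq : M = -((ε' : ℂ) • conjJ d U M) := eq_neg_of_add_eq_zero_left hker
    rw [hMeq, neg_mul, mul_neg, Matrix.smul_mul, Matrix.mul_smul, hC]
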